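/- If x ∈ ℝ^{2n} has all coordinates x_i ≥ 3, then the image (y_1,...,y_{2n}) under the linear map L satisfies y_{i+1} ≥ 2 y_i and y_1 ≥ 6n ≥ 12 for n ≥ 2; in particular y_{i+1} ≥ 2 y_i ≥ 12 for all i. -/

import Mathlib

open Finset

/-- The linear map of the paper (0-based indices), see `stmt2`. -/
noncomputable def Lmap (n : ℕ) (x : Fin (2*n) → ℝ) : Fin (2*n) → ℝ := fun i =>
  if (i : ℕ) = 0 then ∑ j, x j
  else (∑ j : Fin (2*n), if 2*n - (i:ℕ) ≤ (j:ℕ) then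
        ((2:ℝ)^(i:ℕ) + 2^((i:ℕ)-1-(2*n-1-(j:ℕ)))) * x j else 0)
    + 2^(i:ℕ) * ∑ j : Fin (2*n), if (j:ℕ) < 2*n - (i:ℕ) then x j else 0

lemma Lmap_eq (n : ℕ) (x : Fin (2*n) → ℝ) (i : ℕ) (hi : i < 2*n) :
    Lmap n x ⟨i, hi⟩ = 2^i * ∑ j, x j
      + ∑ j : Fin (2*n), (if 2*n - i ≤ (j:ℕ) then 2^((j:ℕ) - (2*n - i)) * x j else 0) := by
  unfold Lmap
  rcases Nat.eq_zero_or_pos i with h0 | h0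
  · subst h0
    simp only [pow_zero, one_mul]
    rw [if_true]
    have : ∑ j : Fin (2*n), (if 2*n - 0 ≤ (j:ℕ) then 2^((j:ℕ) - (2*n - 0)) * x j else 0) = 0 :=
      Finset.sum_eq_zero fun j _ => if_neg (by have := j.isLt; omega)
    rw [this, add_zero]
  · have hne : ¬ (i = 0) := by omega
    rw [if_neg hne]
    rw [Finset.mul_sum, Finset.mul_sum, ← Finset.sum_add_distrib, ← Finset.sum_add_distrib]
    apply Finset.sum_congr rfl
    intro j _
    by_cases h : 2*n - i ≤ (j:ℕ)
    · have hj : ¬ ((j:ℕ) < 2*n - i) := by omega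
      have he : i - 1 - (2*n - 1 - (j:ℕ)) = (j:ℕ) - (2*n - i) := by
        have := j.isLt; omega
      rw [if_pos h, if_neg hj, if_pos h, he]
      ring
    · have hj : (j:ℕ) < 2*n - i := by omega
      rw [if_neg h, if_pos hj, if_neg h]
      ring

lemma Lmap_succ (n : ℕ) (x : Fin (2*n) → ℝ) (k : ℕ) (hk : k + 1 < 2*n) :
    Lmap n x ⟨k+1, hk⟩ =
      2 * Lmap n x ⟨k, Nat.lt_of_succ_lt hk⟩ + x ⟨2*n-1-k, by omega⟩ := by
  rw [Lmap_eq n x (k+1) hk, Lmap_eq n x k (by omega)]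
  have hm : 2*n-1-k < 2*n := by omega
  have hxm : x ⟨2*n-1-k, hm⟩ = ∑ j : Fin (2*n), (if (j:ℕ) = 2*n-1-k then x j else 0) := by
    have : ∀ j : Fin (2*n), ((j:ℕ) = 2*n-1-k) = (j = ⟨2*n-1-k, hm⟩) := by
      intro j; rw [Fin.ext_iff]
    simp only [this]
    rw [Finset.sum_ite_eq' Finset.univ (⟨2*n-1-k, hm⟩ : Fin (2*n)) x, if_pos (Finset.mem_univ _)]
  have key : ∀ j : Fin (2*n),
      (if 2*n - (k+1) ≤ (j:ℕ) then (2:ℝ)^((j:ℕ) - (2*n - (k+1))) * x j else 0)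
      = 2 * (if 2*n - k ≤ (j:ℕ) then 2^((j:ℕ) - (2*n - k)) * x j else 0)
        + (if (j:ℕ) = 2*n-1-k then x j else 0) := by
    intro j
    by_cases h1 : 2*n - k ≤ (j:ℕ)
    · have h2 : 2*n - (k+1) ≤ (j:ℕ) := by omega
      have h3 : ¬ ((j:ℕ) = 2*n-1-k) := by omega
      have he : (j:ℕ) - (2*n - (k+1)) = ((j:ℕ) - (2*n - k)) + 1 := by omega
      rw [if_pos h2, if_pos h1, if_neg h3, he, pow_succ]
      ring
    · by_cases h2 : (j:ℕ) = 2*n-1-k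
      · have h3 : 2*n - (k+1) ≤ (j:ℕ) := by omega
        have he : (j:ℕ) - (2*n - (k+1)) = 0 := by omega
        rw [if_pos h3, if_neg h1, if_pos h2, he, pow_zero]
        ring
      · have h3 : ¬ (2*n - (k+1) ≤ (j:ℕ)) := by omega
        rw [if_neg h3, if_neg h1, if_neg h2]
        ring
  rw [show (∑ j : Fin (2*n), (if 2*n - (k+1) ≤ (j:ℕ) then (2:ℝ)^((j:ℕ) - (2*n - (k+1))) * x j else 0))
      = ∑ j : Fin (2*n), (2 * (if 2*n - k ≤ (j:ℕ) then (2:ℝ)^((j:ℕ) - (2*n - k)) * x j else 0)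
        + (if (j:ℕ) = 2*n-1-k then x j else 0)) from Finset.sum_congr rfl (fun j _ => key j)]
  rw [Finset.sum_add_distrib, ← Finset.mul_sum, ← hxm, pow_succ]
  ring

lemma sum_ge (n : ℕ) (x : Fin (2*n) → ℝ) (hx : ∀ i, 3 ≤ x i) :
    (6*n : ℝ) ≤ ∑ j, x j := by
  have h1 : ∑ _j : Fin (2*n), (3:ℝ) ≤ ∑ j, x j := Finset.sum_le_sum fun j _ => hx j
  have h2 : ∑ _j : Fin (2*n), (3:ℝ) = (6*n : ℝ) := by
    rw [Finset.sum_const, Finset.card_univ, Fintype.card_fin]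
    ring
  linarith

lemma Lmap_zero (n : ℕ) (hn : 0 < n) (x : Fin (2*n) → ℝ) :
    Lmap n x ⟨0, by omega⟩ = ∑ j, x j := by
  rw [Lmap_eq n x 0 (by omega)]
  have : ∑ j : Fin (2*n), (if 2*n - 0 ≤ (j:ℕ) then (2:ℝ)^((j:ℕ) - (2*n - 0)) * x j else 0) = 0 :=
    Finset.sum_eq_zero fun j _ => if_neg (by have := j.isLt; omega)
  rw [this, pow_zero]
  ring

lemma Lmap_ge (n : ℕ) (hn : 2 ≤ n) (x : Fin (2*n) → ℝ) (hx : ∀ i, 3 ≤ x i) :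
    ∀ k, (h : k < 2*n) → (6:ℝ) ≤ Lmap n x ⟨k, h⟩ := by
  intro k
  induction k with
  | zero =>
    intro h
    rw [Lmap_zero n (by omega) x]
    have := sum_ge n x hx
    have : (12:ℝ) ≤ 6*n := by
      have : (2:ℝ) ≤ n := by exact_mod_cast hn
      linarith
    linarith [sum_ge n x hx]
  | succ k ih =>
    intro h
    rw [Lmap_succ n x k h]
    have h1 := ih (Nat.lt_of_succ_lt h)
    have h2 := hx ⟨2*n-1-k, by omega⟩
    linarith

theorem stmt3 (n : ℕ) (hn : 2 ≤ n) (x : Fin (2*n) → ℝ) (hx : ∀ i, 3 ≤ x i) :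
    (∀ k : ℕ, (hk : k + 1 < 2*n) →
      2 * Lmap n x ⟨k, by omega⟩ ≤ Lmap n x ⟨k+1, by omega⟩ ∧
      (12:ℝ) ≤ 2 * Lmap n x ⟨k, by omega⟩) ∧
    (6*n : ℝ) ≤ Lmap n x ⟨0, by omega⟩ ∧ (12:ℝ) ≤ (6*n:ℝ) := by
  have h12 : (12:ℝ) ≤ 6*n := by
    have : (2:ℝ) ≤ n := by exact_mod_cast hn
    linarith
  refine ⟨fun k hk => ?_, ?_, h12⟩
  · have hrec := Lmap_succ n x k hk
    have hg := Lmap_ge n hn x hx k (by omega)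
    have hxm := hx ⟨2*n-1-k, by omega⟩
    constructor
    · rw [hrec]; linarith
    · linarith
  · rw [Lmap_zero n (by omega) x]
    exact sum_ge n x hx
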